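/- Let $\ell : \mathbb{R}^n \to \mathbb{R}$ be a measurable function bounded by $C$ (i.e. $|\ell(x)| \le C$ for all $x$), and let $\sigma > 0$. Define the Gaussian-smoothed function $\hat{\ell}(x) = \mathbb{E}_{\epsilon \sim \mathcal{N}(0, I_n)}[\ell(x + \sigma \epsilon)]$. Then $\hat{\ell}$ is Lipschitz with Lipschitz constant at most $C\sqrt{2/(\pi \sigma^2)}$. -/

import Mathlib

open MeasureTheory Real Set

namespace GaussSmooth

noncomputable def g (σ t : ℝ) : ℝ :=
  (Real.sqrt (2 * π * σ ^ 2))⁻¹ * Real.exp (-t ^ 2 / (2 * σ ^ 2))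

lemma base_pos {σ : ℝ} (hσ : 0 < σ) : 0 < 2 * π * σ ^ 2 := by positivity

lemma g_nonneg {σ : ℝ} (t : ℝ) : 0 ≤ g σ t := by
  unfold g; positivity

lemma g_le {σ : ℝ} (t : ℝ) : g σ t ≤ (Real.sqrt (2 * π * σ ^ 2))⁻¹ := by
  unfold g
  have h1 : Real.exp (-t ^ 2 / (2 * σ ^ 2)) ≤ 1 := by
    rw [Real.exp_le_one_iff]
    rcases eq_or_ne σ 0 with h | h
    · simp [h]
    · apply div_nonpos_of_nonpos_of_nonneg
      · simp [sq_nonneg]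
      · positivity
  calc (Real.sqrt (2 * π * σ ^ 2))⁻¹ * Real.exp (-t ^ 2 / (2 * σ ^ 2))
      ≤ (Real.sqrt (2 * π * σ ^ 2))⁻¹ * 1 := by
        apply mul_le_mul_of_nonneg_left h1; positivity
    _ = _ := mul_one _

lemma g_eq {σ : ℝ} : g σ = fun t => (Real.sqrt (2 * π * σ ^ 2))⁻¹ *
    Real.exp (-(1 / (2 * σ ^ 2)) * t ^ 2) := by
  funext t; unfold g; congr 1; ring_nf

lemma integrable_g {σ : ℝ} (hσ : 0 < σ) : Integrable (g σ) := by
  rw [g_eq]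
  exact (integrable_exp_neg_mul_sq (by positivity)).const_mul _

lemma integral_g {σ : ℝ} (hσ : 0 < σ) : ∫ t, g σ t = 1 := by
  rw [g_eq]
  rw [integral_const_mul, integral_gaussian]
  rw [show π / (1 / (2 * σ ^ 2)) = 2 * π * σ ^ 2 by field_simp]
  rw [inv_mul_cancel₀ (by positivity)]


lemma g_mono {σ : ℝ} (hσ : 0 < σ) {s t : ℝ} (h : t ^ 2 ≤ s ^ 2) : g σ s ≤ g σ t := by
  unfold g
  have h2 : (0:ℝ) < 2 * σ ^ 2 := by positivity
  have hexp : Real.exp (-s ^ 2 / (2 * σ ^ 2)) ≤ Real.exp (-t ^ 2 / (2 * σ ^ 2)) :=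
    Real.exp_le_exp.mpr ((div_le_div_iff_of_pos_right h2).mpr (neg_le_neg h))
  exact mul_le_mul_of_nonneg_left hexp (by positivity)

lemma shift_Iic (hσ : 0 < σ) (a C : ℝ) :
    ∫ t in Iic C, g σ (t - a) = ∫ t in Iic (C - a), g σ t := by
  have h := (measurePreserving_add_right volume a).setIntegral_image_emb
      (MeasurableEquiv.addRight a).measurableEmbedding (fun t => g σ (t - a)) (Iic (C - a))
  rw [show ((· + a) '' Iic (C - a)) = Iic C by
      rw [image_add_const_Iic]; congr 1; ring] at h
  rw [h]
  congr 1; funext t; rw [add_sub_cancel_right]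

lemma shift_Ioi (hσ : 0 < σ) (a C : ℝ) :
    ∫ t in Ioi C, g σ (t - a) = ∫ t in Ioi (C - a), g σ t := by
  have h := (measurePreserving_add_right volume a).setIntegral_image_emb
      (MeasurableEquiv.addRight a).measurableEmbedding (fun t => g σ (t - a)) (Ioi (C - a))
  rw [show ((· + a) '' Ioi (C - a)) = Ioi C by
      rw [image_add_const_Ioi]; congr 1; ring] at h
  rw [h]
  congr 1; funext t; rw [add_sub_cancel_right]

lemma oneD (hσ : 0 < σ) {a : ℝ} (ha : 0 ≤ a) :
    ∫ t, |g σ t - g σ (t - a)| ≤ 2 * (Real.sqrt (2 * π * σ ^ 2))⁻¹ * a := by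
  set c := (Real.sqrt (2 * π * σ ^ 2))⁻¹ with hc
  have hg := integrable_g hσ
  have hga : Integrable (fun t => g σ (t - a)) := hg.comp_sub_right a
  have hint : Integrable (fun t => |g σ t - g σ (t - a)|) := (hg.sub hga).abs
  have key1 : ∀ t ∈ Iic (a / 2), |g σ t - g σ (t - a)| = g σ t - g σ (t - a) := by
    intro t ht
    simp only [mem_Iic] at ht
    exact abs_of_nonneg (sub_nonneg.mpr (g_mono hσ (by nlinarith)))
  have key2 : ∀ t ∈ Ioi (a / 2), |g σ t - g σ (t - a)| = g σ (t - a) - g σ t := by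
    intro t ht
    simp only [mem_Ioi] at ht
    rw [abs_sub_comm]
    exact abs_of_nonneg (sub_nonneg.mpr (g_mono hσ (by nlinarith)))
  have split := integral_add_compl (measurableSet_Iic (a := a / 2)) hint
  rw [compl_Iic] at split
  have hIic : ∫ t in Iic (a / 2), |g σ t - g σ (t - a)| = ∫ t in Ioc (a / 2 - a) (a / 2), g σ t := by
    rw [setIntegral_congr_fun measurableSet_Iic key1,
        integral_sub hg.integrableOn hga.integrableOn, shift_Iic hσ]
    have hu : (∫ t in Iic (a / 2 - a), g σ t) + ∫ t in Ioc (a / 2 - a) (a / 2), g σ t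
        = ∫ t in Iic (a / 2), g σ t := by
      rw [← setIntegral_union ?hd measurableSet_Ioc hg.integrableOn hg.integrableOn,
          Iic_union_Ioc_eq_Iic (by linarith)]
      case hd => exact Iic_disjoint_Ioc le_rfl
    linarith
  have hIoi : ∫ t in Ioi (a / 2), |g σ t - g σ (t - a)| = ∫ t in Ioc (a / 2 - a) (a / 2), g σ t := by
    rw [setIntegral_congr_fun measurableSet_Ioi key2,
        integral_sub hga.integrableOn hg.integrableOn, shift_Ioi hσ]
    have hu : (∫ t in Ioc (a / 2 - a) (a / 2), g σ t) + ∫ t in Ioi (a / 2), g σ t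
        = ∫ t in Ioi (a / 2 - a), g σ t := by
      rw [← setIntegral_union ?hd measurableSet_Ioi hg.integrableOn hg.integrableOn,
          Ioc_union_Ioi_eq_Ioi (by linarith)]
      case hd => exact Ioc_disjoint_Ioi le_rfl
    linarith
  have hbound : ∫ t in Ioc (a / 2 - a) (a / 2), g σ t ≤ c * a := by
    have hvol : volume (Ioc (a / 2 - a) (a / 2)) < ⊤ := by
      rw [Real.volume_Ioc]; exact ENNReal.ofReal_lt_top
    have hle := norm_setIntegral_le_of_norm_le_const (f := g σ) hvol
      (C := c) (fun t _ => by rw [Real.norm_eq_abs, abs_of_nonneg (g_nonneg t)]; exact g_le t)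
    rw [Real.norm_eq_abs] at hle
    calc ∫ t in Ioc (a / 2 - a) (a / 2), g σ t ≤ |∫ t in Ioc (a / 2 - a) (a / 2), g σ t| :=
          le_abs_self _
      _ ≤ c * volume.real (Ioc (a / 2 - a) (a / 2)) := hle
      _ = c * a := by
          rw [Real.volume_real_Ioc_of_le (by linarith)]
          congr 1; ring
  rw [← split, hIic, hIoi]
  linarith


noncomputable def K (n : ℕ) (σ : ℝ) (w : EuclideanSpace ℝ (Fin n)) : ℝ :=
  (2 * π * σ ^ 2) ^ (-(n : ℝ) / 2) * Real.exp (-‖w‖ ^ 2 / (2 * σ ^ 2))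

lemma norm_sq_eq {n : ℕ} (w : EuclideanSpace ℝ (Fin n)) : ‖w‖ ^ 2 = ∑ i, (w i) ^ 2 := by
  rw [EuclideanSpace.norm_eq, Real.sq_sqrt (by positivity)]
  simp [sq_abs]

lemma coeff_eq {σ : ℝ} (hσ : 0 < σ) (n : ℕ) :
    (2 * π * σ ^ 2) ^ (-(n : ℝ) / 2) = ((Real.sqrt (2 * π * σ ^ 2))⁻¹) ^ n := by
  have hb := base_pos hσ
  rw [show (-(n : ℝ) / 2) = (-(1 : ℝ) / 2) * n by ring, Real.rpow_mul hb.le,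
    Real.rpow_natCast]
  congr 1
  rw [show (-(1 : ℝ) / 2) = -(1 / 2) by ring, Real.rpow_neg hb.le, ← Real.sqrt_eq_rpow]

lemma K_prod {n : ℕ} {σ : ℝ} (hσ : 0 < σ) (w : EuclideanSpace ℝ (Fin n)) :
    K n σ w = ∏ i, g σ (w i) := by
  unfold K g
  rw [Finset.prod_mul_distrib, Finset.prod_const, Finset.card_univ, Fintype.card_fin,
    ← Real.exp_sum, coeff_eq hσ]
  congr 1
  rw [norm_sq_eq, neg_div, Finset.sum_div, ← Finset.sum_neg_distrib]
  simp [neg_div]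

lemma integrable_K {n : ℕ} {σ : ℝ} (hσ : 0 < σ) : Integrable (K n σ) := by
  have hmp := (EuclideanSpace.volume_preserving_symm_measurableEquiv_toLp (Fin n)).symm
  rw [← hmp.integrable_comp_emb (MeasurableEquiv.measurableEmbedding _)]
  have : (K n σ) ∘ (MeasurableEquiv.toLp 2 (Fin n → ℝ)).symm.symm
      = fun u : Fin n → ℝ => ∏ i, g σ (u i) := by
    funext u
    simp only [Function.comp_apply]
    rw [K_prod hσ]
    rfl
  rw [this]
  exact Integrable.fintype_prod (f := fun _ => g σ) (fun _ => integrable_g hσ)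

lemma const_eq {σ : ℝ} (hσ : 0 < σ) :
    Real.sqrt (2 / (π * σ ^ 2)) = 2 * (Real.sqrt (2 * π * σ ^ 2))⁻¹ := by
  have hb := base_pos hσ
  rw [show (2 : ℝ) / (π * σ ^ 2) = 4 / (2 * π * σ ^ 2) by field_simp; ring]
  rw [Real.sqrt_div (by norm_num : (0:ℝ) ≤ 4),
    show Real.sqrt (4 : ℝ) = 2 by
      rw [show (4 : ℝ) = 2 ^ 2 by norm_num, Real.sqrt_sq (by norm_num)],
    div_eq_mul_inv]

lemma nD {n : ℕ} {σ : ℝ} (hσ : 0 < σ) (v : EuclideanSpace ℝ (Fin n)) :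
    ∫ w, |K n σ w - K n σ (w - v)| ≤ Real.sqrt (2 / (π * σ ^ 2)) * ‖v‖ := by
  rcases eq_or_ne v 0 with hv | hv
  · simp only [hv, sub_zero, sub_self, abs_zero, integral_zero, norm_zero, mul_zero, le_refl]
  · have hn : 0 < n := by
      rcases Nat.eq_zero_or_pos n with rfl | h
      · haveI : Subsingleton (EuclideanSpace ℝ (Fin 0)) :=
          ⟨fun a b => by ext i; exact i.elim0⟩
        exact absurd (Subsingleton.elim v 0) hv
      · exact h
    set i0 : Fin n := ⟨0, hn⟩ with hi0
    set a := ‖v‖ with ha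
    have hapos : 0 < a := norm_pos_iff.mpr hv
    set w0 : EuclideanSpace ℝ (Fin n) := a • EuclideanSpace.single i0 (1 : ℝ) with hw0
    have hnw0 : ‖v‖ = ‖w0‖ := by
      rw [hw0, norm_smul, EuclideanSpace.norm_single]
      simp [abs_of_nonneg hapos.le, ha]
    set T := (Submodule.reflection (ℝ ∙ (v - w0))ᗮ : EuclideanSpace ℝ (Fin n) ≃ₗᵢ[ℝ]
        EuclideanSpace ℝ (Fin n)) with hT
    have hTv : T v = w0 := Submodule.reflection_sub hnw0
    have h1 : ∫ w, |K n σ w - K n σ (w - v)| = ∫ w, |K n σ w - K n σ (w - w0)| := by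
      rw [← T.symm.measurePreserving.integral_comp T.symm.toHomeomorph.measurableEmbedding
        (fun w => |K n σ w - K n σ (w - v)|)]
      congr 1; funext w
      have e2 : T.symm w - v = T.symm (w - w0) := by
        rw [map_sub, ← hTv, LinearIsometryEquiv.symm_apply_apply]
      rw [e2]
      unfold K
      rw [LinearIsometryEquiv.norm_map, LinearIsometryEquiv.norm_map]
    rw [h1]
    have hmp2 := (EuclideanSpace.volume_preserving_symm_measurableEquiv_toLp (Fin n)).symm
    have h2 : ∫ w, |K n σ w - K n σ (w - w0)|
        = ∫ u : Fin n → ℝ,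
            ∏ i, (fun i t => if i = i0 then |g σ t - g σ (t - a)| else g σ t) i (u i) := by
      rw [← hmp2.integral_comp (MeasurableEquiv.measurableEmbedding _)]
      congr 1; funext u
      set e := (MeasurableEquiv.toLp 2 (Fin n → ℝ)).symm.symm with he
      have hco : ∀ i, (e u) i = u i := fun i => rfl
      have hco2 : ∀ i, (e u - w0) i = u i - (if i = i0 then a else 0) := by
        intro i
        have : w0 i = if i = i0 then a else 0 := by
          rw [hw0]
          rcases eq_or_ne i i0 with h | h <;>
            simp [h, EuclideanSpace.single_apply]
        simp [this, hco]
      rw [K_prod hσ, K_prod hσ]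
      simp only [hco, hco2]
      have hP : ∀ i ∈ Finset.univ \ {i0},
          g σ (u i - if i = i0 then a else 0) = g σ (u i) := by
        intro i hi
        rw [if_neg (by simpa using (Finset.mem_sdiff.mp hi).2), sub_zero]
      have hQ : ∀ i ∈ Finset.univ \ {i0},
          (if i = i0 then |g σ (u i) - g σ (u i - a)| else g σ (u i)) = g σ (u i) := by
        intro i hi
        rw [if_neg (by simpa using (Finset.mem_sdiff.mp hi).2)]
      have hsplit1 : ∏ x : Fin n, g σ (u x - if x = i0 then a else 0)
          = g σ (u i0 - a) * ∏ x ∈ Finset.univ \ {i0}, g σ (u x) := by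
        rw [Finset.prod_eq_mul_prod_sdiff_singleton_of_mem (Finset.mem_univ i0),
          Finset.prod_congr rfl hP, if_pos rfl]
      have hsplit2 : ∏ x : Fin n, g σ (u x)
          = g σ (u i0) * ∏ x ∈ Finset.univ \ {i0}, g σ (u x) :=
        Finset.prod_eq_mul_prod_sdiff_singleton_of_mem (Finset.mem_univ i0) _
      have hsplit3 : (∏ x : Fin n, if x = i0 then |g σ (u x) - g σ (u x - a)| else g σ (u x))
          = |g σ (u i0) - g σ (u i0 - a)| * ∏ x ∈ Finset.univ \ {i0}, g σ (u x) := by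
        rw [Finset.prod_eq_mul_prod_sdiff_singleton_of_mem (Finset.mem_univ i0),
          Finset.prod_congr rfl hQ, if_pos rfl]
      rw [hsplit1, hsplit2, hsplit3, ← sub_mul, abs_mul,
        abs_of_nonneg (Finset.prod_nonneg fun i _ => g_nonneg (σ := σ) _)]
    rw [h2, MeasureTheory.integral_fintype_prod_volume_eq_prod
      (f := fun i t => if i = i0 then |g σ t - g σ (t - a)| else g σ t)]
    rw [Finset.prod_eq_mul_prod_sdiff_singleton_of_mem (Finset.mem_univ i0)]
    have hone : ∀ i ∈ Finset.univ \ {i0},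
        (∫ t, if i = i0 then |g σ t - g σ (t - a)| else g σ t) = 1 := by
      intro i hi
      have : i ≠ i0 := by simpa using (Finset.mem_sdiff.mp hi).2
      simp only [if_neg this]
      exact integral_g hσ
    rw [Finset.prod_congr rfl hone, Finset.prod_const_one, mul_one]
    simp only [if_pos rfl]
    calc (∫ t, |g σ t - g σ (t - a)|) ≤ 2 * (Real.sqrt (2 * π * σ ^ 2))⁻¹ * a :=
          oneD hσ hapos.le
      _ = Real.sqrt (2 / (π * σ ^ 2)) * ‖v‖ := by rw [const_eq hσ, ha]

end GaussSmooth

open GaussSmooth MeasureTheory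

/-- Gaussian smoothing of a function bounded by `C` is `C * √(2/(π σ²))`-Lipschitz. -/
theorem gaussian_smoothing_lipschitz (n : ℕ) (C σ : ℝ) (hσ : 0 < σ)
    (ℓ : EuclideanSpace ℝ (Fin n) → ℝ) (hmeas : Measurable ℓ)
    (hbound : ∀ x, |ℓ x| ≤ C)
    (ℓhat : EuclideanSpace ℝ (Fin n) → ℝ)
    (hℓhat : ∀ x, ℓhat x =
      ∫ z, ℓ z * ((2 * Real.pi * σ ^ 2) ^ (-(n : ℝ) / 2) *
        Real.exp (-‖x - z‖ ^ 2 / (2 * σ ^ 2)))) :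
    ∀ x y, |ℓhat x - ℓhat y| ≤ C * Real.sqrt (2 / (Real.pi * σ ^ 2)) * ‖x - y‖ := by
  intro x y
  have hC : 0 ≤ C := le_trans (abs_nonneg _) (hbound 0)
  have hKx : Integrable (fun z => K n σ (x - z)) := (integrable_K hσ).comp_sub_left x
  have hKy : Integrable (fun z => K n σ (y - z)) := (integrable_K hσ).comp_sub_left y
  have hIx : Integrable (fun z => ℓ z * K n σ (x - z)) :=
    hKx.bdd_mul hmeas.aestronglyMeasurable (Filter.Eventually.of_forall fun z => by
      rw [Real.norm_eq_abs]; exact hbound z)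
  have hIy : Integrable (fun z => ℓ z * K n σ (y - z)) :=
    hKy.bdd_mul hmeas.aestronglyMeasurable (Filter.Eventually.of_forall fun z => by
      rw [Real.norm_eq_abs]; exact hbound z)
  have hx' : ℓhat x = ∫ z, ℓ z * K n σ (x - z) := hℓhat x
  have hy' : ℓhat y = ∫ z, ℓ z * K n σ (y - z) := hℓhat y
  have hdiff : ℓhat x - ℓhat y = ∫ z, ℓ z * (K n σ (x - z) - K n σ (y - z)) := by
    rw [hx', hy', ← integral_sub hIx hIy]
    congr 1; funext z; ring
  have habs : |ℓhat x - ℓhat y| ≤ ∫ z, C * |K n σ (x - z) - K n σ (y - z)| := by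
    rw [hdiff, ← Real.norm_eq_abs]
    apply norm_integral_le_of_norm_le (((hKx.sub hKy).abs).const_mul C)
    filter_upwards with z
    rw [Real.norm_eq_abs, abs_mul]
    exact mul_le_mul_of_nonneg_right (hbound z) (abs_nonneg _)
  have hshift : ∫ z, |K n σ (x - z) - K n σ (y - z)|
      = ∫ w, |K n σ w - K n σ (w - (x - y))| := by
    rw [← integral_sub_left_eq_self (fun w => |K n σ w - K n σ (w - (x - y))|) volume x]
    congr 1; funext z
    rw [sub_sub_sub_cancel_left]
  calc |ℓhat x - ℓhat y| ≤ ∫ z, C * |K n σ (x - z) - K n σ (y - z)| := habs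
    _ = C * ∫ z, |K n σ (x - z) - K n σ (y - z)| := integral_const_mul C _
    _ = C * ∫ w, |K n σ w - K n σ (w - (x - y))| := by rw [hshift]
    _ ≤ C * (Real.sqrt (2 / (π * σ ^ 2)) * ‖x - y‖) :=
        mul_le_mul_of_nonneg_left (nD hσ (x - y)) hC
    _ = C * Real.sqrt (2 / (π * σ ^ 2)) * ‖x - y‖ := by ring
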